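/- For any element w of a finite Coxeter group W and any subset J of the simple reflections, the parabolic subgroup W_J contains a unique maximal element (in Bruhat order) among its elements that lie below w in Bruhat order. -/

import Mathlib

/-- The strong Bruhat order on a Coxeter group: the reflexive-transitive closure of the
relation relating `a` to `a * t` (`t` a reflection) when the length increases. -/
def CoxeterSystem.bruhatLE {B W : Type*} [Group W] {M : CoxeterMatrix B}
    (cs : CoxeterSystem M W) : W → W → Prop :=
  Relation.ReflTransGen (fun a b => cs.length a < cs.length b ∧
    ∃ t : W, cs.IsReflection t ∧ b = a * t)

open List

private theorem conj_iff {G : Type*} [Group G] (a c x : G) :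
    (a * x * a⁻¹ = c) ↔ x = a⁻¹ * c * a := by
  constructor
  · intro h; rw [← h]; group
  · intro h; rw [h]; group

private theorem if_sign {α : Type*} [Monoid α] [HasDistribNeg α] (E : α) (P Q : Prop)
    [Decidable P] [Decidable Q] :
    (if Q then -(if P then -E else E) else (if P then -E else E)) =
      E * (if P then (-1 : α) else 1) * (if Q then (-1 : α) else 1) := by
  by_cases hP : P <;> by_cases hQ : Q <;> simp [hP, hQ]

namespace CoxeterSystem

variable {B W : Type*} [Group W] {M : CoxeterMatrix B} (cs : CoxeterSystem M W)

local prefix:100 "s" => cs.simple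
local prefix:100 "π" => cs.wordProd
local prefix:100 "ℓ" => cs.length

open Classical in
private noncomputable def auxFun (i : B) : W × ℤˣ → W × ℤˣ :=
  fun x => (s i * x.1 * s i, if x.1 = s i then -x.2 else x.2)

private theorem auxConj (i : B) (t : W) : s i * (s i * t * s i) * s i = t := by
  rw [← mul_assoc, ← mul_assoc, cs.simple_mul_simple_self, one_mul, mul_assoc,
    cs.simple_mul_simple_self, mul_one]

private theorem auxCond (i : B) (t : W) : (s i * t * s i = s i) ↔ t = s i := by
  constructor
  · intro h
    have h2 := congrArg (fun z => s i * z * s i) h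
    rw [cs.auxConj] at h2
    rw [h2, cs.simple_mul_simple_self, one_mul]
  · rintro rfl
    rw [cs.simple_mul_simple_self, one_mul]

private theorem auxFun_involutive (i : B) : Function.Involutive (cs.auxFun i) := by
  classical
  rintro ⟨t, e⟩
  simp only [auxFun, cs.auxConj, cs.auxCond]
  split <;> simp_all

private theorem liftable : M.IsLiftable (fun i => (cs.auxFun_involutive i).toPerm) := by
  classical
  intro i i'
  set m := M i i' with hm
  set p := s i * s i' with hpdef
  have hp : p ^ m = 1 := cs.simple_mul_simple_pow i i'
  have hp1 : s i' * p = p⁻¹ * s i' := by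
    rw [hpdef, mul_inv_rev, cs.inv_simple, cs.inv_simple]
    group
  have hcomm : ∀ k : ℕ, s i' * p ^ k = (p⁻¹) ^ k * s i' := by
    intro k
    induction k with
    | zero => simp
    | succ k ih => rw [pow_succ, ← mul_assoc, ih, mul_assoc, hp1, ← mul_assoc, ← pow_succ]
  have hpinv : p⁻¹ = s i' * s i := by
    rw [hpdef, mul_inv_rev, cs.inv_simple, cs.inv_simple]
  have hconj : ∀ (k j : ℕ), (p ^ k)⁻¹ * ((p⁻¹) ^ j * s i') * p ^ k = (p⁻¹) ^ (j + 2 * k) * s i' := by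
    intro k j
    rw [mul_assoc, mul_assoc, hcomm k, ← mul_assoc, ← mul_assoc, ← inv_pow, ← pow_add, ← pow_add]
    have hexp : k + j + k = j + 2 * k := by ring
    rw [hexp]
  have hfirst : ∀ u : W, s i * (s i' * u * s i') * s i = p * u * p⁻¹ := by
    intro u
    rw [hpdef, mul_inv_rev, cs.inv_simple, cs.inv_simple]
    group
  have key : ∀ (t : W) (e : ℤˣ) (k : ℕ),
      (((cs.auxFun_involutive i).toPerm * (cs.auxFun_involutive i').toPerm) ^ k) (t, e) =
        (p ^ k * t * (p ^ k)⁻¹,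
          e * ∏ c ∈ Finset.range (2 * k),
            (if t = (p⁻¹) ^ c * s i' then (-1 : ℤˣ) else 1)) := by
    intro t e k
    induction k with
    | zero => simp
    | succ k ih =>
      rw [pow_succ' (_ * _) k, Equiv.Perm.mul_apply, ih, Equiv.Perm.mul_apply,
        Function.Involutive.coe_toPerm, Function.Involutive.coe_toPerm]
      simp only [auxFun]
      have c1 : (p ^ k * t * (p ^ k)⁻¹ = s i') ↔ t = (p⁻¹) ^ (2 * k) * s i' := by
        rw [conj_iff]
        have h0 : (p ^ k)⁻¹ * s i' * p ^ k = (p⁻¹) ^ (2 * k) * s i' := by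
          have := hconj k 0
          simpa using this
        rw [h0]
      have c2 : (s i' * (p ^ k * t * (p ^ k)⁻¹) * s i' = s i) ↔
          t = (p⁻¹) ^ (2 * k + 1) * s i' := by
        have e1 : ∀ u : W, (s i' * u * s i' = s i) ↔ u = p⁻¹ * s i' := by
          intro u
          constructor
          · intro h
            have h3 := cs.auxConj i' u
            rw [h] at h3
            rw [← h3, hpinv]
          · intro h
            rw [h, hpinv]
            exact cs.auxConj i' (s i)
        rw [e1, conj_iff]
        have h4 := hconj k 1
        rw [pow_one] at h4
        rw [h4]
        have h5 : 1 + 2 * k = 2 * k + 1 := by ring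
        rw [h5]
      rw [if_sign, Prod.mk.injEq]
      constructor
      · -- first components
        rw [hfirst]
        rw [pow_succ' p k, mul_inv_rev p (p ^ k)]
        simp only [mul_assoc]
      · -- sign components
        rw [c1, c2]
        have h2 : 2 * (k + 1) = 2 * k + 1 + 1 := by ring
        rw [h2, Finset.prod_range_succ, Finset.prod_range_succ, ← mul_assoc, ← mul_assoc]
  apply Equiv.ext
  rintro ⟨t, e⟩
  rw [key t e m]
  have hsplit : ∏ c ∈ Finset.range (2 * m),
      (if t = (p⁻¹) ^ c * s i' then (-1 : ℤˣ) else 1) = 1 := by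
    have h2 : 2 * m = m + m := by ring
    rw [h2, Finset.prod_range_add]
    have hper : ∀ c : ℕ, (if t = (p⁻¹) ^ (m + c) * s i' then (-1 : ℤˣ) else 1) =
        (if t = (p⁻¹) ^ c * s i' then (-1 : ℤˣ) else 1) := by
      intro c
      have : (p⁻¹) ^ (m + c) = (p⁻¹) ^ c := by
        rw [pow_add, inv_pow, hp]; simp
      rw [this]
    rw [Finset.prod_congr rfl (fun c _ => hper c)]
    exact Int.units_mul_self _
  rw [hsplit, hp]
  simp

/-- The reflection-sign permutation representation of a Coxeter group. -/
private noncomputable def permRep : W →* Equiv.Perm (W × ℤˣ) :=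
  cs.lift ⟨fun i => (cs.auxFun_involutive i).toPerm, cs.liftable⟩

private theorem permRep_simple (i : B) :
    cs.permRep (s i) = (cs.auxFun_involutive i).toPerm :=
  cs.lift_apply_simple cs.liftable i


open Classical in
private theorem permRep_wordProd (ω : List B) (t : W) (e : ℤˣ) :
    cs.permRep (π ω) (t, e) =
      (π ω * t * (π ω)⁻¹, e * (-1 : ℤˣ) ^ ((cs.rightInvSeq ω).count t)) := by
  classical
  induction ω with
  | nil =>
    rw [cs.wordProd_nil, map_one]
    simp
  | cons i ω ih =>
    rw [cs.wordProd_cons, map_mul, Equiv.Perm.mul_apply, ih, cs.permRep_simple,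
      Function.Involutive.coe_toPerm]
    simp only [auxFun]
    rw [Prod.mk.injEq]
    constructor
    · rw [mul_inv_rev, cs.inv_simple]
      simp only [mul_assoc]
    · show (if π ω * t * (π ω)⁻¹ = s i then _ else _) = _
      have hris : cs.rightInvSeq (i :: ω) = ((π ω)⁻¹ * s i * π ω) :: cs.rightInvSeq ω := rfl
      rw [hris, List.count_cons]
      have hcond : (π ω * t * (π ω)⁻¹ = s i) ↔ ((π ω)⁻¹ * s i * π ω = t) := by
        rw [conj_iff]
        constructor
        · intro h; exact h.symm
        · intro h; exact h.symm
      by_cases hc : (π ω)⁻¹ * s i * π ω = t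
      · rw [if_pos (hcond.mpr hc), if_pos (by simpa using hc)]
        rw [pow_succ]
        simp [mul_assoc]
      · rw [if_neg (fun h => hc (hcond.mp h)), if_neg (by simpa using hc)]
        simp

private noncomputable def eta (w t : W) : ℤˣ := (cs.permRep w (t, 1)).2

private theorem permRep_apply (w t : W) (e : ℤˣ) :
    cs.permRep w (t, e) = (w * t * w⁻¹, e * cs.eta w t) := by
  obtain ⟨ω, rfl⟩ := cs.wordProd_surjective w
  rw [cs.permRep_wordProd, eta, cs.permRep_wordProd]
  simp

open Classical in
private theorem eta_neg_iff {ω : List B} (hω : cs.IsReduced ω) (t : W) :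
    cs.eta (π ω) t = -1 ↔ t ∈ cs.rightInvSeq ω := by
  classical
  rw [eta, cs.permRep_wordProd]
  simp only [one_mul]
  constructor
  · intro h
    by_contra hmem
    rw [List.count_eq_zero_of_not_mem hmem] at h
    simp at h
  · intro hmem
    rw [List.count_eq_one_of_mem hω.nodup_rightInvSeq hmem]
    simp

private theorem eta_refl_self' (u : W) (i : B) :
    cs.eta (u * s i * u⁻¹) (u * s i * u⁻¹) = -1 := by
  set t := u * s i * u⁻¹ with htdef
  have e1 : u⁻¹ * t * (u⁻¹)⁻¹ = s i := by rw [htdef]; group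
  have h1 : cs.permRep u⁻¹ (t, 1) = (s i, cs.eta u⁻¹ t) := by
    rw [cs.permRep_apply, e1, one_mul]
  have h2 : cs.permRep (s i) (s i, cs.eta u⁻¹ t) = (s i, -(cs.eta u⁻¹ t)) := by
    rw [cs.permRep_simple, Function.Involutive.coe_toPerm]
    simp [auxFun, cs.simple_mul_simple_self]
  have h3 : cs.permRep u (s i, -(cs.eta u⁻¹ t)) = (t, -(cs.eta u⁻¹ t) * cs.eta u (s i)) := by
    rw [cs.permRep_apply, htdef]
  have h4 : cs.eta u⁻¹ t * cs.eta u (s i) = 1 := by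
    have h5 : cs.permRep u (cs.permRep u⁻¹ (t, 1)) = (t, 1) := by
      rw [← Equiv.Perm.mul_apply, ← map_mul, mul_inv_cancel, map_one, Equiv.Perm.one_apply]
    rw [h1, cs.permRep_apply u (s i) (cs.eta u⁻¹ t), ← htdef] at h5
    exact ((Prod.mk.injEq _ _ _ _).mp h5).2
  have hsplit : cs.permRep t (t, (1:ℤˣ)) =
      cs.permRep u (cs.permRep (s i) (cs.permRep u⁻¹ (t, 1))) := by
    rw [← Equiv.Perm.mul_apply, ← Equiv.Perm.mul_apply, ← map_mul, ← map_mul, htdef,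
      mul_assoc]
  have : cs.eta t t = (cs.permRep t (t, (1:ℤˣ))).2 := rfl
  rw [this, hsplit, h1, h2, h3]
  rw [neg_mul, h4]

private theorem eta_refl_self {t : W} (ht : cs.IsReflection t) : cs.eta t t = -1 := by
  obtain ⟨u, i, rfl⟩ := ht
  exact cs.eta_refl_self' u i

private theorem lt_of_eta_neg {w t : W} (ht : cs.IsReflection t) (h : cs.eta w t = -1) :
    ℓ (w * t) < ℓ w := by
  obtain ⟨ω, hred, hw⟩ := cs.exists_reduced_word' w
  subst hw
  exact (cs.isRightInversion_of_mem_rightInvSeq hred ((cs.eta_neg_iff hred t).mp h)).2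

private theorem eta_neg_of_lt {w t : W} (ht : cs.IsReflection t) (hl : ℓ (w * t) < ℓ w) :
    cs.eta w t = -1 := by
  rcases Int.units_eq_one_or (cs.eta w t) with h | h
  · exfalso
    have hmul : cs.eta (w * t) t = - cs.eta w t := by
      have h1 : cs.permRep t (t, (1:ℤˣ)) = (t, -1) := by
        rw [cs.permRep_apply, cs.eta_refl_self ht, ht.mul_self, one_mul, one_mul, ht.inv]
    -- w * t applied
      have h2 : cs.permRep (w * t) (t, (1:ℤˣ)) = (w * t * t * (w*t)⁻¹, -cs.eta w t) := by
        rw [map_mul, Equiv.Perm.mul_apply, h1, cs.permRep_apply]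
        rw [Prod.mk.injEq]
        constructor
        · rw [mul_assoc w t t, ht.mul_self, mul_one, mul_inv_rev, ht.inv, ← mul_assoc]
        · rw [neg_one_mul]
      show (cs.permRep (w * t) (t, 1)).2 = - cs.eta w t
      rw [h2]
    have h3 : cs.eta (w * t) t = -1 := by rw [hmul, h]
    have h4 := cs.lt_of_eta_neg ht h3
    rw [mul_assoc, ht.mul_self, mul_one] at h4
    omega
  · exact h

private theorem mem_rightInvSeq_of_lt {ω : List B} (hω : cs.IsReduced ω) {t : W}
    (ht : cs.IsReflection t) (hl : ℓ (π ω * t) < ℓ (π ω)) : t ∈ cs.rightInvSeq ω :=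
  (cs.eta_neg_iff hω t).mp (cs.eta_neg_of_lt ht hl)

private theorem strong_exchange_right {w t : W} (ht : cs.IsReflection t) (hl : ℓ (w * t) < ℓ w)
    {ω : List B} (hω : cs.IsReduced ω) (hw : w = π ω) :
    ∃ j < ω.length, w * t = π (ω.eraseIdx j) := by
  subst hw
  have hmem := cs.mem_rightInvSeq_of_lt hω ht hl
  obtain ⟨j, hj, hgetl⟩ := List.mem_iff_getElem.mp hmem
  refine ⟨j, ?_, ?_⟩
  · rw [← cs.length_rightInvSeq ω]; exact hj
  · rw [← cs.wordProd_mul_getD_rightInvSeq ω j]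
    congr 1
    rw [List.getD_eq_getElem _ _ hj, hgetl]

private theorem strong_exchange_left {w t : W} (ht : cs.IsReflection t) (hl : ℓ (t * w) < ℓ w)
    {ω : List B} (hω : cs.IsReduced ω) (hw : w = π ω) :
    ∃ j < ω.length, t * w = π (ω.eraseIdx j) := by
  subst hw
  have hmem : t ∈ cs.leftInvSeq ω := by
    have hrev : cs.IsReduced ω.reverse := (cs.isReduced_reverse_iff ω).mpr hω
    have h1 : ℓ (π ω.reverse * t) < ℓ (π ω.reverse) := by
      rw [cs.wordProd_reverse, cs.length_inv]
      have h2 : (π ω)⁻¹ * t = (t * π ω)⁻¹ := by rw [mul_inv_rev, ht.inv]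
      rw [h2, cs.length_inv]
      exact hl
    have hmem' := cs.mem_rightInvSeq_of_lt hrev ht h1
    rw [cs.rightInvSeq_reverse] at hmem'
    exact List.mem_reverse.mp hmem'
  obtain ⟨j, hj, hgetl⟩ := List.mem_iff_getElem.mp hmem
  refine ⟨j, ?_, ?_⟩
  · rw [← cs.length_leftInvSeq ω]; exact hj
  · rw [← cs.getD_leftInvSeq_mul_wordProd ω j]
    congr 1
    rw [List.getD_eq_getElem _ _ hj, hgetl]


/-! ### Bruhat order basics -/

private theorem le_step {u t : W} (ht : cs.IsReflection t) (h : ℓ u < ℓ (u * t)) :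
    cs.bruhatLE u (u * t) :=
  Relation.ReflTransGen.single ⟨h, t, ht, rfl⟩

private theorem le_of_mul_lt {v t : W} (ht : cs.IsReflection t) (h : ℓ (v * t) < ℓ v) :
    cs.bruhatLE (v * t) v := by
  have h2 : v * t * t = v := by rw [mul_assoc, ht.mul_self, mul_one]
  have h3 := cs.le_step ht (u := v * t) (by rw [h2]; exact h)
  rwa [h2] at h3

private theorem le_simple_left_up (i : B) (w : W) (h : ℓ w < ℓ (s i * w)) :
    cs.bruhatLE w (s i * w) := by
  have ht : cs.IsReflection (w⁻¹ * s i * w) := by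
    have := (cs.isReflection_simple i).conj w⁻¹
    simpa using this
  have h2 : s i * w = w * (w⁻¹ * s i * w) := by group
  rw [h2]
  exact cs.le_step ht (by rw [← h2]; exact h)

private theorem le_simple_left_down (i : B) (w : W) (h : ℓ (s i * w) < ℓ w) :
    cs.bruhatLE (s i * w) w := by
  have ht : cs.IsReflection ((s i * w)⁻¹ * s i * (s i * w)) := by
    have := (cs.isReflection_simple i).conj (s i * w)⁻¹
    simpa using this
  have h2 : w = (s i * w) * ((s i * w)⁻¹ * s i * (s i * w)) := by
    have : (s i * w) * ((s i * w)⁻¹ * s i * (s i * w)) = s i * (s i * w) := by group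
    rw [this, cs.simple_mul_simple_cancel_left]
  nth_rw 2 [h2]
  exact cs.le_step ht (by rw [← h2]; exact h)

private theorem eq_or_length_lt_of_le {u v : W} (h : cs.bruhatLE u v) : u = v ∨ ℓ u < ℓ v := by
  induction h with
  | refl => exact Or.inl rfl
  | tail hub step ih =>
    obtain ⟨hlen, _, _, _⟩ := step
    rcases ih with rfl | hlt
    · exact Or.inr hlen
    · exact Or.inr (lt_trans hlt hlen)

private theorem bruhat_antisymm {u v : W} (h1 : cs.bruhatLE u v) (h2 : cs.bruhatLE v u) :
    u = v := by
  rcases cs.eq_or_length_lt_of_le h1 with rfl | hl1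
  · rfl
  · rcases cs.eq_or_length_lt_of_le h2 with rfl | hl2
    · rfl
    · omega

/-! ### Reduced sublists -/

private theorem exists_reduced_sublist (ω : List B) :
    ∃ σ, σ.Sublist ω ∧ cs.IsReduced σ ∧ π σ = π ω := by
  induction ω with
  | nil => exact ⟨[], List.Sublist.refl [], by simp [IsReduced], rfl⟩
  | cons i ω ih =>
    obtain ⟨σ, hsub, hred, hprod⟩ := ih
    rcases cs.length_simple_mul (π σ) i with h | h
    · refine ⟨i :: σ, hsub.cons₂ i, ?_, ?_⟩
      · show ℓ (π (i :: σ)) = (i :: σ).length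
        rw [cs.wordProd_cons, h, hred]
        simp
      · rw [cs.wordProd_cons, cs.wordProd_cons, hprod]
    · have hlt : ℓ (s i * π σ) < ℓ (π σ) := by omega
      obtain ⟨j, hj, herase⟩ := cs.strong_exchange_left (cs.isReflection_simple i) hlt hred rfl
      refine ⟨σ.eraseIdx j, ?_, ?_, ?_⟩
      · exact (List.eraseIdx_sublist σ j).trans (hsub.trans (List.sublist_cons_self i ω))
      · show ℓ (π (σ.eraseIdx j)) = (σ.eraseIdx j).length
        rw [← herase]
        have h4 := List.length_eraseIdx_add_one hj
        have h5 : ℓ (π σ) = σ.length := hred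
        omega
      · rw [← herase, cs.wordProd_cons, hprod]

private theorem exists_reduced_sublist_of_le {u w : W} (h : cs.bruhatLE u w) :
    ∀ ω : List B, cs.IsReduced ω → w = π ω →
      ∃ σ, σ.Sublist ω ∧ cs.IsReduced σ ∧ π σ = u := by
  induction h with
  | refl => exact fun ω hred hw => ⟨ω, List.Sublist.refl ω, hred, hw.symm⟩
  | @tail b c hub step ih =>
    intro ω hred hw
    obtain ⟨hlen, t, ht, rfl⟩ := step
    have hbt : b * t * t = b := by rw [mul_assoc, ht.mul_self, mul_one]
    have hlt : ℓ (b * t * t) < ℓ (b * t) := by rw [hbt]; exact hlen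
    obtain ⟨j, hj, hexch⟩ := cs.strong_exchange_right ht hlt hred hw
    rw [hbt] at hexch
    obtain ⟨ρ, hρsub, hρred, hρprod⟩ := cs.exists_reduced_sublist (ω.eraseIdx j)
    obtain ⟨σ, hσ, h1, h2⟩ := ih ρ hρred (hexch.trans hρprod.symm)
    exact ⟨σ, hσ.trans (hρsub.trans (List.eraseIdx_sublist ω j)), h1, h2⟩

/-! ### The key joint induction: subword property and lifting property -/

private theorem key (n : ℕ) :
    (∀ ω : List B, cs.IsReduced ω → ω.length = n → ∀ σ : List B, σ.Sublist ω →
        cs.bruhatLE (π σ) (π ω)) ∧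
    (∀ (i : B) (u v : W), ℓ v = n → ℓ (s i * v) < ℓ v → cs.bruhatLE u v →
        ℓ u < ℓ (s i * u) → cs.bruhatLE u (s i * v)) ∧
    (∀ (i : B) (u v : W), ℓ v = n → ℓ v < ℓ (s i * v) → cs.bruhatLE u v →
        ℓ u < ℓ (s i * u) → cs.bruhatLE (s i * u) (s i * v)) := by
  induction n using Nat.strong_induction_on with
  | _ n ih =>
    refine ⟨?_, ?_, ?_⟩
    · -- subword property
      intro ω hred hlen σ hsub
      cases ω with
      | nil =>
        rw [List.sublist_nil.mp hsub]
        exact Relation.ReflTransGen.refl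
      | cons i ω₁ =>
        have hred₁ : cs.IsReduced ω₁ := by
          have := IsReduced.drop (j := 1) hred
          simpa using this
        have hl1 : ℓ (π ω₁) = ω₁.length := hred₁
        have hlv : ℓ (π (i :: ω₁)) = ω₁.length + 1 := by
          have : ℓ (π (i :: ω₁)) = (i :: ω₁).length := hred
          simpa using this
        have hlsmall : ω₁.length < n := by
          simp at hlen
          omega
        have hup : ℓ (π ω₁) < ℓ (s i * π ω₁) := by
          rw [← cs.wordProd_cons]
          omega
        rcases List.sublist_cons_iff.mp hsub with hσ | ⟨σ₁, rfl, hσ₁⟩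
        · have h1 : cs.bruhatLE (π σ) (π ω₁) :=
            (ih ω₁.length hlsmall).1 ω₁ hred₁ rfl σ hσ
          have h2 : cs.bruhatLE (π ω₁) (π (i :: ω₁)) := by
            rw [cs.wordProd_cons]
            exact cs.le_simple_left_up i (π ω₁) hup
          exact h1.trans h2
        · have h1 : cs.bruhatLE (π σ₁) (π ω₁) :=
            (ih ω₁.length hlsmall).1 ω₁ hred₁ rfl σ₁ hσ₁
          rw [cs.wordProd_cons, cs.wordProd_cons]
          rcases cs.length_simple_mul (π σ₁) i with h | h
          · exact (ih ω₁.length hlsmall).2.2 i (π σ₁) (π ω₁) hl1 hup h1 (by omega)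
          · have h2 : cs.bruhatLE (s i * π σ₁) (π σ₁) :=
              cs.le_simple_left_down i (π σ₁) (by omega)
            exact (h2.trans h1).trans (cs.le_simple_left_up i (π ω₁) hup)
    · -- property Z
      intro i u v hn hdesc hle hup
      obtain ⟨ω₁, hred₁, hv₁⟩ := cs.exists_reduced_word' (s i * v)
      have hlen₁ : ω₁.length = ℓ (s i * v) := by
        rw [hv₁]; exact hred₁.symm
      have hconsprod : π (i :: ω₁) = v := by
        rw [cs.wordProd_cons, ← hv₁, cs.simple_mul_simple_cancel_left]
      have hconsred : cs.IsReduced (i :: ω₁) := by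
        show ℓ (π (i :: ω₁)) = (i :: ω₁).length
        rw [hconsprod]
        simp only [List.length_cons]
        rcases cs.length_simple_mul v i with h | h <;> omega
      obtain ⟨σ, hσsub, hσred, hσprod⟩ :=
        cs.exists_reduced_sublist_of_le hle (i :: ω₁) hconsred hconsprod.symm
      rcases List.sublist_cons_iff.mp hσsub with hσ | ⟨σ₁, rfl, hσ₁⟩
      · have h1 : cs.bruhatLE (π σ) (π ω₁) :=
          (ih (ℓ (s i * v)) (by omega)).1 ω₁ hred₁ hlen₁ σ hσ
        rw [hσprod, ← hv₁] at h1
        exact h1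
      · exfalso
        have h1 : ℓ u = σ₁.length + 1 := by
          have h2 : ℓ (π (i :: σ₁)) = (i :: σ₁).length := hσred
          rw [hσprod] at h2
          simpa using h2
        have h3 : s i * u = π σ₁ := by
          rw [← hσprod, cs.wordProd_cons, cs.simple_mul_simple_cancel_left]
        have h4 : ℓ (s i * u) ≤ σ₁.length := by
          rw [h3]; exact cs.length_wordProd_le σ₁
        omega
    · -- diamond
      intro i u v hn hupv hle hup
      rcases Relation.ReflTransGen.cases_tail hle with heq | ⟨v₀, hle₀, step⟩
      · rw [heq]
        exact Relation.ReflTransGen.refl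
      · obtain ⟨hlen₀, t, ht, rfl⟩ := step
        rcases cs.length_simple_mul v₀ i with h₀ | h₀
        · have hsu : cs.bruhatLE (s i * u) (s i * v₀) :=
            (ih (ℓ v₀) (by omega)).2.2 i u v₀ rfl (by omega) hle₀ hup
          have he : s i * (v₀ * t) = (s i * v₀) * t := by rw [mul_assoc]
          have hstep : cs.bruhatLE (s i * v₀) (s i * (v₀ * t)) := by
            rw [he]
            exact cs.le_step ht (by rw [← he]; omega)
          exact hsu.trans hstep
        · have h1 : cs.bruhatLE u (s i * v₀) :=
            (ih (ℓ v₀) (by omega)).2.1 i u v₀ rfl (by omega) hle₀ hup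
          have h2 : cs.bruhatLE (s i * u) (s i * (s i * v₀)) :=
            (ih (ℓ (s i * v₀)) (by omega)).2.2 i u (s i * v₀) rfl
              (by rw [cs.simple_mul_simple_cancel_left]; omega) h1 hup
          rw [cs.simple_mul_simple_cancel_left] at h2
          have h3 : cs.bruhatLE v₀ (v₀ * t) := cs.le_step ht hlen₀
          have h4 : cs.bruhatLE (v₀ * t) (s i * (v₀ * t)) :=
            cs.le_simple_left_up i (v₀ * t) (by omega)
          exact h2.trans (h3.trans h4)

/-! ### Lifting property corollaries -/

private theorem lift_z {i : B} {u v : W} (hdesc : ℓ (s i * v) < ℓ v)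
    (hle : cs.bruhatLE u v) (hup : ℓ u < ℓ (s i * u)) : cs.bruhatLE u (s i * v) :=
  (cs.key (ℓ v)).2.1 i u v rfl hdesc hle hup

private theorem diamond {i : B} {u v : W} (hv : ℓ v < ℓ (s i * v)) (hle : cs.bruhatLE u v)
    (hu : ℓ u < ℓ (s i * u)) : cs.bruhatLE (s i * u) (s i * v) :=
  (cs.key (ℓ v)).2.2 i u v rfl hv hle hu

private theorem lift_up {i : B} {u v : W} (hdesc : ℓ (s i * v) < ℓ v)
    (hle : cs.bruhatLE u (s i * v)) (hup : ℓ u < ℓ (s i * u)) : cs.bruhatLE (s i * u) v := by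
  have h := cs.diamond (v := s i * v) (i := i)
    (by rw [cs.simple_mul_simple_cancel_left]; exact hdesc) hle hup
  rwa [cs.simple_mul_simple_cancel_left] at h

private theorem lift_down {i : B} {u v : W} (hdesc : ℓ (s i * v) < ℓ v)
    (hle : cs.bruhatLE u v) (hdu : ℓ (s i * u) < ℓ u) :
    cs.bruhatLE (s i * u) (s i * v) := by
  have h1 : cs.bruhatLE (s i * u) v := (cs.le_simple_left_down i u hdu).trans hle
  exact cs.lift_z hdesc h1 (by rw [cs.simple_mul_simple_cancel_left]; omega)


/-! ### Parabolic subgroups -/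

private theorem mem_closure_word {J : Set B} (σ : List B) (hσ : ∀ j ∈ σ, j ∈ J) :
    π σ ∈ Subgroup.closure (cs.simple '' J) := by
  induction σ with
  | nil => rw [cs.wordProd_nil]; exact Subgroup.one_mem _
  | cons j σ ih =>
    rw [cs.wordProd_cons]
    exact Subgroup.mul_mem _
      (Subgroup.subset_closure ⟨j, hσ j (by simp), rfl⟩)
      (ih (fun x hx => hσ x (List.mem_cons_of_mem j hx)))

private theorem exists_word_of_mem_closure {J : Set B} {u : W}
    (hu : u ∈ Subgroup.closure (cs.simple '' J)) :
    ∃ σ : List B, (∀ j ∈ σ, j ∈ J) ∧ π σ = u := by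
  induction hu using Subgroup.closure_induction with
  | mem x hx =>
    obtain ⟨j, hj, rfl⟩ := hx
    exact ⟨[j], by simpa using hj, by simp⟩
  | one => exact ⟨[], by simp, cs.wordProd_nil⟩
  | mul x y hx hy ihx ihy =>
    obtain ⟨σ₁, h1, h2⟩ := ihx
    obtain ⟨σ₂, h3, h4⟩ := ihy
    refine ⟨σ₁ ++ σ₂, ?_, ?_⟩
    · intro j hj
      rcases List.mem_append.mp hj with h | h
      exacts [h1 j h, h3 j h]
    · rw [cs.wordProd_append, h2, h4]
  | inv x hx ihx =>
    obtain ⟨σ, h1, h2⟩ := ihx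
    refine ⟨σ.reverse, ?_, ?_⟩
    · intro j hj
      exact h1 j (List.mem_reverse.mp hj)
    · rw [cs.wordProd_reverse, h2]

private theorem simple_mem_of_descent {J : Set B} {u : W}
    (hu : u ∈ Subgroup.closure (cs.simple '' J)) {i : B} (hd : ℓ (s i * u) < ℓ u) :
    s i ∈ Subgroup.closure (cs.simple '' J) := by
  obtain ⟨σ0, hσ0, hprod⟩ := cs.exists_word_of_mem_closure hu
  obtain ⟨σ, hsub, hred, hprod2⟩ := cs.exists_reduced_sublist σ0
  have hσJ : ∀ j ∈ σ, j ∈ J := fun j hj => hσ0 j (hsub.subset hj)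
  have hmem : s i ∈ cs.leftInvSeq σ := by
    have hrev : cs.IsReduced σ.reverse := (cs.isReduced_reverse_iff σ).mpr hred
    have h1 : ℓ (π σ.reverse * s i) < ℓ (π σ.reverse) := by
      rw [cs.wordProd_reverse, hprod2, hprod]
      have h2 : u⁻¹ * s i = (s i * u)⁻¹ := by rw [mul_inv_rev, cs.inv_simple]
      rw [h2, cs.length_inv, cs.length_inv]
      exact hd
    have hmem' := cs.mem_rightInvSeq_of_lt hrev (cs.isReflection_simple i) h1
    rw [cs.rightInvSeq_reverse] at hmem'
    exact List.mem_reverse.mp hmem'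
  obtain ⟨j, hjlen, hget⟩ := List.mem_iff_getElem.mp hmem
  have hjlen' : j < σ.length := by rw [← cs.length_leftInvSeq σ]; exact hjlen
  have hgetd : (cs.leftInvSeq σ).getD j 1 = s i := by
    rw [List.getD_eq_getElem _ _ hjlen, hget]
  rw [cs.getD_leftInvSeq σ j] at hgetd
  rw [← hgetd]
  have htake : π (σ.take j) ∈ Subgroup.closure (cs.simple '' J) :=
    cs.mem_closure_word _ (fun x hx => hσJ x ((List.take_sublist j σ).subset hx))
  have hmid : (Option.map cs.simple σ[j]?).getD 1 ∈ Subgroup.closure (cs.simple '' J) := by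
    rw [List.getElem?_eq_getElem hjlen']
    simp only [Option.map_some, Option.getD_some]
    exact Subgroup.subset_closure ⟨σ[j], hσJ _ (List.getElem_mem hjlen'), rfl⟩
  exact Subgroup.mul_mem _ (Subgroup.mul_mem _ htake hmid) (Subgroup.inv_mem _ htake)

/-! ### Existence of the maximum -/

private theorem exists_max (J : Set B) : ∀ (n : ℕ) (w : W), ℓ w = n →
    ∃ m : W, m ∈ Subgroup.closure (cs.simple '' J) ∧ cs.bruhatLE m w ∧
      ∀ u ∈ Subgroup.closure (cs.simple '' J), cs.bruhatLE u w → cs.bruhatLE u m := by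
  intro n
  induction n using Nat.strong_induction_on with
  | _ n ih =>
    intro w hn
    by_cases hw : w = 1
    · subst hw
      refine ⟨1, Subgroup.one_mem _, Relation.ReflTransGen.refl, ?_⟩
      intro u _ hle
      rcases cs.eq_or_length_lt_of_le hle with rfl | hlt
      · exact Relation.ReflTransGen.refl
      · rw [cs.length_one] at hlt; omega
    · obtain ⟨i, hi⟩ := cs.exists_leftDescent_of_ne_one hw
      have hi' : ℓ (s i * w) < ℓ w := hi
      obtain ⟨m', hm'K, hm'le, hm'max⟩ := ih (ℓ (s i * w)) (by omega) (s i * w) rfl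
      by_cases hsK : s i ∈ Subgroup.closure (cs.simple '' J)
      · rcases cs.length_simple_mul m' i with hup | hdown
        · refine ⟨s i * m', Subgroup.mul_mem _ hsK hm'K,
            cs.lift_up hi' hm'le (by omega), ?_⟩
          intro u huK hule
          rcases cs.length_simple_mul u i with hu | hu
          · have h1 := cs.lift_z hi' hule (by omega)
            have h2 := hm'max u huK h1
            exact h2.trans (cs.le_simple_left_up i m' (by omega))
          · have h1 := cs.lift_down hi' hule (by omega)
            have h2 := hm'max (s i * u) (Subgroup.mul_mem _ hsK huK) h1
            have h3 := cs.diamond (i := i) (u := s i * u) (v := m') (by omega) h2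
              (by rw [cs.simple_mul_simple_cancel_left]; omega)
            rwa [cs.simple_mul_simple_cancel_left] at h3
        · refine ⟨m', hm'K, hm'le.trans (cs.le_simple_left_down i w hi'), ?_⟩
          intro u huK hule
          rcases cs.length_simple_mul u i with hu | hu
          · exact hm'max u huK (cs.lift_z hi' hule (by omega))
          · have h1 := cs.lift_down hi' hule (by omega)
            have h2 := hm'max (s i * u) (Subgroup.mul_mem _ hsK huK) h1
            have h3 := cs.lift_z (i := i) (u := s i * u) (v := m') (by omega) h2
              (by rw [cs.simple_mul_simple_cancel_left]; omega)
            have h4 := cs.lift_up (i := i) (u := s i * u) (v := m') (by omega) h3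
              (by rw [cs.simple_mul_simple_cancel_left]; omega)
            rwa [cs.simple_mul_simple_cancel_left] at h4
      · refine ⟨m', hm'K, hm'le.trans (cs.le_simple_left_down i w hi'), ?_⟩
        intro u huK hule
        rcases cs.length_simple_mul u i with hu | hu
        · exact hm'max u huK (cs.lift_z hi' hule (by omega))
        · exact absurd (cs.simple_mem_of_descent huK (by omega)) hsK

end CoxeterSystem


/-- For any element `w` of a finite Coxeter group and any subset `J` of the simple
reflections, the parabolic subgroup `W_J` contains a unique maximal element (in Bruhat
order) among its elements lying below `w`. -/
theorem unique_maximal_below_in_parabolic {B W : Type*} [Group W] [Finite W]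
    {M : CoxeterMatrix B} (cs : CoxeterSystem M W) (J : Set B) (w : W) :
    ∃! m : W, m ∈ Subgroup.closure (cs.simple '' J) ∧ cs.bruhatLE m w ∧
      ∀ u ∈ Subgroup.closure (cs.simple '' J), cs.bruhatLE u w → cs.bruhatLE u m := by
  obtain ⟨m, h1, h2, h3⟩ := cs.exists_max J (cs.length w) w rfl
  refine ⟨m, ⟨h1, h2, h3⟩, ?_⟩
  rintro m₂ ⟨g1, g2, g3⟩
  exact cs.bruhat_antisymm (h3 m₂ g1 g2) (g3 m h1 h2)
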